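/- For a word w over {1,2}, the semistandard insertion tableau P(w) of the RSK correspondence is determined by (and determines) the pair consisting of the rank r(w) (number of paired 21-factors) together with the multiplicities of 1's and 2's in w. That is, two words u, v over {1,2} of the same length satisfy P(u) = P(v) if and only if r(u) = r(v) and u, v contain the same number of 1's (equivalently, the same number of 2's). -/

import Mathlib

open MeasureTheory ProbabilityTheory

namespace RSKpaper

/-- Insert a letter into a row (Schensted row insertion); returns the new row
and the bumped letter, if any. -/
def rowInsert (r : List ℕ) (a : ℕ) : List ℕ × Option ℕ :=
  match r.findIdx? (fun b => decide (a < b)) with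
  | none => (r ++ [a], none)
  | some i => (r.set i a, r[i]?)

/-- Insert a letter into a tableau (list of rows). -/
def tabInsert : List (List ℕ) → ℕ → List (List ℕ)
  | [], a => [[a]]
  | r :: rs, a =>
    match rowInsert r a with
    | (r', none) => r' :: rs
    | (r', some b) => r' :: tabInsert rs b

/-- The RSK insertion tableau `P(w)` of a word. -/
def Ptab (w : List ℕ) : List (List ℕ) := w.foldl tabInsert ([] : List (List ℕ))

/-- The shape of the RSK tableaux of a word, as the list of row lengths. -/
def shape (w : List ℕ) : List ℕ := (Ptab w).map List.length

/-- The RSK recording tableau `Q(w)`: the entry `i+1` is placed in the row in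
which the shape grows when the `(i+1)`-st letter is inserted. -/
def Qtab (w : List ℕ) : List (List ℕ) :=
  (List.range w.length).foldl (fun q i =>
    let s1 := shape (w.take i)
    let s2 := shape (w.take (i + 1))
    let j := (List.range s2.length).findIdx
      (fun r => decide (s2.getD r 0 ≠ s1.getD r 0))
    if j < q.length then q.set j (q.getD j ([] : List ℕ) ++ [i + 1]) else q ++ [[i + 1]]) ([] : List (List ℕ))

/-- Iterated bracketing of factors `21` in a two–letter word, 1-based positions:
returns the stack of positions of currently unmatched `2`'s together with the
list of bracketed pairs `(position of 2, position of 1)`. -/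
def bracketFold (w : List ℕ) : List ℕ × List (ℕ × ℕ) :=
  (w.zipIdx.map Prod.swap).foldl (fun st p =>
    if p.2 = 2 then ((p.1 + 1) :: st.1, st.2)
    else
      match st.1 with
      | [] => st
      | j :: rest => (rest, (j, p.1 + 1) :: st.2)) ([], [])

/-- The rank `r(w)`: the number of bracketed `21`-pairs. -/
def rank (w : List ℕ) : ℕ := (bracketFold w).2.length

/-- The set of paired (bracketed) 1-based positions of a two-letter word. -/
def pairedPositions (w : List ℕ) : Finset ℕ :=
  ((bracketFold w).2.map (fun p => p.1)).toFinset ∪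
    ((bracketFold w).2.map (fun p => p.2)).toFinset

/-- The set of free (unbracketed) 1-based positions of a two-letter word. -/
def freePositions (w : List ℕ) : Finset ℕ :=
  (Finset.Icc 1 w.length) \ pairedPositions w

/-- The 1-based positions of the free `1`'s of a two-letter word. -/
def freeOnePositions (w : List ℕ) : Finset ℕ :=
  (freePositions w).filter (fun i => w.getD (i - 1) 0 = 1)

/-- The initial segment `[x]_n` of an infinite sequence, as a word. -/
def pre (n : ℕ) (x : ℕ → ℕ) : List ℕ := (List.range n).map x

/-- A two–letter Bernoulli ensemble: coordinates are i.i.d. with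
`P(1) = p₁`, `P(2) = p₂`. -/
def IsBernoulli2 (μ : Measure (ℕ → ℕ)) (p₁ p₂ : ℝ) : Prop :=
  IsProbabilityMeasure μ ∧
    iIndepFun (fun n (x : ℕ → ℕ) => x n) μ ∧
    (∀ n : ℕ, μ {x | x n = 1} = ENNReal.ofReal p₁) ∧
    (∀ n : ℕ, μ {x | x n = 2} = ENNReal.ofReal p₂) ∧
    p₁ + p₂ = 1

/-- A `k`-letter Bernoulli ensemble with letter probabilities `p 1 ≥ … ≥ p k`. -/
def IsBernoulliK (μ : Measure (ℕ → ℕ)) (k : ℕ) (p : ℕ → ℝ) : Prop :=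
  IsProbabilityMeasure μ ∧
    iIndepFun (fun n (x : ℕ → ℕ) => x n) μ ∧
    (∀ n i : ℕ, μ {x | x n = i} = ENNReal.ofReal (p i)) ∧
    (∀ i : ℕ, i < 1 ∨ k < i → p i = 0) ∧
    (∀ i : ℕ, 1 ≤ i → i < k → p (i + 1) ≤ p i) ∧
    0 < p k ∧ (∑ i ∈ Finset.Icc 1 k, p i) = 1



section Aux

/-- Normal form of the insertion tableau of a two-letter word. -/
def mkTab (a c r : ℕ) : List (List ℕ) :=
  (if a + c = 0 then [] else [List.replicate a 1 ++ List.replicate c 2]) ++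
  (if r = 0 then [] else [List.replicate r 2])

lemma findIdx_lt_one (a c : ℕ) :
    (List.replicate a 1 ++ List.replicate c 2).findIdx? (fun b => decide (1 < b))
      = if c = 0 then none else some a := by
  induction a with
  | zero =>
    cases c with
    | zero => simp
    | succ m => simp [List.replicate_succ, List.findIdx?_cons]
  | succ n ih =>
    simp only [List.replicate_succ, List.cons_append, List.findIdx?_cons]
    rw [show (decide (1 < 1)) = false by simp, if_neg (by simp), ih]
    split <;> simp <;> omega

lemma findIdx_lt_two (a c : ℕ) :
    (List.replicate a 1 ++ List.replicate c 2).findIdx? (fun b => decide (2 < b))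
      = none := by
  induction a with
  | zero =>
    induction c with
    | zero => simp
    | succ m ihc => simpa [List.replicate_succ, List.findIdx?_cons] using ihc
  | succ n ih => simpa [List.replicate_succ, List.findIdx?_cons] using ih

lemma set_rep (a : ℕ) (t : List ℕ) :
    (List.replicate a 1 ++ 2 :: t).set a 1 = List.replicate (a + 1) 1 ++ t := by
  induction a with
  | zero => simp
  | succ n ih => simp [List.replicate_succ, ih]

lemma get_rep (a : ℕ) (t : List ℕ) :
    (List.replicate a 1 ++ 2 :: t)[a]? = some 2 := by
  induction a with
  | zero => simp
  | succ n ih => simpa [List.replicate_succ] using ih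

lemma rowInsert_two (a c : ℕ) :
    rowInsert (List.replicate a 1 ++ List.replicate c 2) 2
      = (List.replicate a 1 ++ List.replicate (c + 1) 2, none) := by
  unfold rowInsert
  rw [findIdx_lt_two]
  simp [List.replicate_succ' (n := c), List.append_assoc]

lemma rowInsert_one_zero (a : ℕ) :
    rowInsert (List.replicate a 1 ++ List.replicate 0 2) 1
      = (List.replicate (a + 1) 1, none) := by
  unfold rowInsert
  rw [findIdx_lt_one]
  simp [List.replicate_succ' (n := a)]

lemma rowInsert_one_pos (a c : ℕ) (hc : c ≠ 0) :
    rowInsert (List.replicate a 1 ++ List.replicate c 2) 1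
      = (List.replicate (a + 1) 1 ++ List.replicate (c - 1) 2, some 2) := by
  obtain ⟨m, rfl⟩ : ∃ m, c = m + 1 := ⟨c - 1, by omega⟩
  unfold rowInsert
  rw [findIdx_lt_one, if_neg (by omega)]
  simp only [Nat.zero_add, List.replicate_succ]
  rw [set_rep, get_rep]
  simp [List.replicate_succ]

lemma tabInsert_mk_two (a c r : ℕ) (h : r ≤ a) :
    tabInsert (mkTab a c r) 2 = mkTab a (c + 1) r := by
  by_cases h0 : a + c = 0
  · obtain ⟨rfl, rfl⟩ : a = 0 ∧ c = 0 := by omega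
    have hr : r = 0 := by omega
    subst hr
    simp [mkTab, tabInsert]
  · unfold mkTab
    rw [if_neg h0, if_neg (show a + (c + 1) ≠ 0 from by omega)]
    simp only [List.singleton_append, tabInsert, rowInsert_two]

lemma tabInsert_mk_one_zero (a r : ℕ) (h : r ≤ a) :
    tabInsert (mkTab a 0 r) 1 = mkTab (a + 1) 0 r := by
  by_cases h0 : a = 0
  · subst h0
    have hr : r = 0 := by omega
    subst hr
    simp [mkTab, tabInsert]
  · unfold mkTab
    rw [if_neg (show a + 0 ≠ 0 from by omega), if_neg (show a + 1 + 0 ≠ 0 from by omega)]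
    simp only [List.singleton_append, tabInsert, rowInsert_one_zero]
    simp

lemma tabInsert_mk_one_pos (a c r : ℕ) (hc : c ≠ 0) :
    tabInsert (mkTab a c r) 1 = mkTab (a + 1) (c - 1) (r + 1) := by
  unfold mkTab
  rw [if_neg (show a + c ≠ 0 from by omega),
    if_neg (show a + 1 + (c - 1) ≠ 0 from by omega)]
  cases r with
  | zero =>
    simp only [if_pos rfl, List.append_nil, List.singleton_append, tabInsert,
      rowInsert_one_pos a c hc]
    rfl
  | succ s =>
    rw [if_neg (by omega)]
    simp only [List.singleton_append, tabInsert, rowInsert_one_pos a c hc]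
    have : rowInsert (List.replicate (s + 1) 2) 2
        = (List.replicate (s + 2) 2, none) := by
      have := rowInsert_two 0 (s + 1)
      simpa using this
    simp [tabInsert, this]

/-- number of currently unmatched 2's -/
def stk (w : List ℕ) : ℕ := (bracketFold w).1.length

lemma bracketFold_append (w : List ℕ) (x : ℕ) :
    bracketFold (w ++ [x]) =
      (fun st (p : ℕ × ℕ) =>
        if p.2 = 2 then ((p.1 + 1) :: st.1, st.2)
        else
          match st.1 with
          | [] => st
          | j :: rest => (rest, (j, p.1 + 1) :: st.2)) (bracketFold w) (w.length, x) := by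
  unfold bracketFold
  rw [List.zipIdx_append, List.map_append, List.foldl_append]
  simp

lemma rank_append_two (w : List ℕ) :
    rank (w ++ [2]) = rank w ∧ stk (w ++ [2]) = stk w + 1 := by
  unfold rank stk
  rw [bracketFold_append]
  simp

lemma rank_append_one (w : List ℕ) :
    (stk w = 0 → rank (w ++ [1]) = rank w ∧ stk (w ++ [1]) = 0) ∧
    (stk w ≠ 0 → rank (w ++ [1]) = rank w + 1 ∧ stk (w ++ [1]) = stk w - 1) := by
  unfold rank stk
  rw [bracketFold_append]
  rcases h : (bracketFold w).1 with _ | ⟨j, rest⟩ <;> simp [h]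

lemma count_one_two (w : List ℕ) (hw : ∀ a ∈ w, a = 1 ∨ a = 2) :
    w.count 1 + w.count 2 = w.length := by
  induction w with
  | nil => simp
  | cons x t ih =>
    have hx := hw x (by simp)
    have ht := ih (fun a ha => hw a (by simp [ha]))
    rcases hx with rfl | rfl <;> simp [List.count_cons] <;> omega

lemma main_invariant (w : List ℕ) (hw : ∀ a ∈ w, a = 1 ∨ a = 2) :
    Ptab w = mkTab (w.count 1) (stk w) (rank w) ∧
      stk w + rank w = w.count 2 ∧ rank w ≤ w.count 1 := by
  induction w using List.reverseRecOn with
  | nil => simp [Ptab, mkTab, stk, rank, bracketFold]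
  | append_singleton t x ih =>
    have hx := hw x (by simp)
    obtain ⟨h1, h2, h3⟩ := ih (fun a ha => hw a (by simp [ha]))
    have hP : Ptab (t ++ [x]) = tabInsert (Ptab t) x := by
      unfold Ptab; rw [List.foldl_append]; rfl
    rcases hx with rfl | rfl
    · have hc1 : (t ++ [1]).count 1 = t.count 1 + 1 := by simp
      have hc2 : (t ++ [1]).count 2 = t.count 2 := by simp
      by_cases hs : stk t = 0
      · obtain ⟨hr, hs'⟩ := (rank_append_one t).1 hs
        refine ⟨?_, by omega, by omega⟩
        rw [hP, h1, hs, hr, hs', hc1, tabInsert_mk_one_zero _ _ h3]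
      · obtain ⟨hr, hs'⟩ := (rank_append_one t).2 hs
        refine ⟨?_, by omega, by omega⟩
        rw [hP, h1, hr, hs', hc1, tabInsert_mk_one_pos _ _ _ hs]
    · have hc1 : (t ++ [2]).count 1 = t.count 1 := by simp
      have hc2 : (t ++ [2]).count 2 = t.count 2 + 1 := by simp
      obtain ⟨hr, hs'⟩ := rank_append_two t
      refine ⟨?_, by omega, by omega⟩
      rw [hP, h1, hr, hs', hc1, tabInsert_mk_two _ _ _ h3]

/-- extract (count of 1's, unmatched 2's, rank) from a normal-form tableau -/
def deco (t : List (List ℕ)) : ℕ × ℕ × ℕ :=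
  ((t.getD 0 ([] : List ℕ)).count 1, (t.getD 0 ([] : List ℕ)).count 2,
    (t.getD 1 ([] : List ℕ)).length)

lemma deco_mk (a c r : ℕ) (h : r ≤ a) : deco (mkTab a c r) = (a, c, r) := by
  unfold deco mkTab
  by_cases h0 : a + c = 0
  · obtain ⟨rfl, rfl⟩ : a = 0 ∧ c = 0 := by omega
    have hr : r = 0 := by omega
    subst hr
    simp
  · rw [if_neg h0]
    by_cases hr : r = 0 <;> subst_vars <;> simp_all [List.count_replicate]

end Aux

/-- for two-letter words of the same length, the insertion tableaux
coincide iff the ranks and the multiplicities of the letter `1` coincide. -/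
theorem Ptab_eq_iff_rank_and_count (u v : List ℕ)
    (hu : ∀ a ∈ u, a = 1 ∨ a = 2) (hv : ∀ a ∈ v, a = 1 ∨ a = 2)
    (hlen : u.length = v.length) :
    Ptab u = Ptab v ↔ rank u = rank v ∧ u.count 1 = v.count 1 := by
  obtain ⟨hu1, hu2, hu3⟩ := main_invariant u hu
  obtain ⟨hv1, hv2, hv3⟩ := main_invariant v hv
  constructor
  · intro h
    have hd : deco (Ptab u) = deco (Ptab v) := by rw [h]
    rw [hu1, hv1, deco_mk _ _ _ hu3, deco_mk _ _ _ hv3] at hd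
    have := Prod.mk.injEq _ _ _ _ ▸ hd
    simp only [Prod.mk.injEq] at hd
    exact ⟨hd.2.2, hd.1⟩
  · rintro ⟨hr, hc⟩
    have hlu := count_one_two u hu
    have hlv := count_one_two v hv
    have hc2 : u.count 2 = v.count 2 := by omega
    have hst : stk u = stk v := by omega
    rw [hu1, hv1, hr, hc, hst]


end RSKpaper
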